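/- For x ∈ X, the set η_x = {E(F;v) ∈ E_X : x ∈ C(F;v)} is an ultrafilter on the semilattice E_X, and every ultrafilter on E_X is of the form η_x for some x ∈ X. -/

import Mathlib

open Function

/-- The one-sided shift map on `ℕ → A`. -/
def shft {A : Type*} (x : ℕ → A) : ℕ → A := fun n => x (n + 1)

/-- Concatenation of a finite word `w` with an infinite word `x`. -/
def wcat {A : Type*} (w : List A) (x : ℕ → A) : ℕ → A :=
  fun n => w.getD n (x (n - w.length))

/-- Partial bijections on `ℕ → A` modelled as relations (sets of pairs (input, output)). -/
abbrev PB (A : Type*) := Set ((ℕ → A) × (ℕ → A))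

/-- Composition on the largest possible domain: `rcomp r s` applies `s` first, then `r`
(i.e. the semigroup product `r · s`). -/
def rcomp {A : Type*} (r s : PB A) : PB A := {p | ∃ y, (p.1, y) ∈ s ∧ (y, p.2) ∈ r}

/-- Inverse of a partial bijection. -/
def rinv {A : Type*} (r : PB A) : PB A := {p | (p.2, p.1) ∈ r}

/-- The identity map on a subset `U`. -/
def idOn {A : Type*} (U : Set (ℕ → A)) : PB A := {p | p.1 ∈ U ∧ p.2 = p.1}

/-- The partial bijection `s_μ : x ↦ μx` on `{x ∈ X : μx ∈ X}`. -/
def sMap {A : Type*} (X : Set (ℕ → A)) (μ : List A) : PB A :=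
  {p | p.1 ∈ X ∧ wcat μ p.1 ∈ X ∧ p.2 = wcat μ p.1}

/-- The cylinder set `C(v) = {vx : x ∈ A^ℕ} ∩ X`. -/
def Cyl {A : Type*} (X : Set (ℕ → A)) (v : List A) : Set (ℕ → A) :=
  {y | y ∈ X ∧ ∃ x, y = wcat v x}

/-- `C(μ,ν) = {νx ∈ X : μx ∈ X}`. -/
def Cmn {A : Type*} (X : Set (ℕ → A)) (μ ν : List A) : Set (ℕ → A) :=
  {y | ∃ x, y = wcat ν x ∧ y ∈ X ∧ wcat μ x ∈ X}

/-- `C(F;v) = {vx ∈ X : fx ∈ X for all f ∈ F}`. -/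
def CFv {A : Type*} (X : Set (ℕ → A)) (F : Finset (List A)) (v : List A) : Set (ℕ → A) :=
  {y | ∃ x, y = wcat v x ∧ y ∈ X ∧ ∀ f ∈ F, wcat f x ∈ X}

/-- The idempotent `E(F;v) = Id_{C(F;v)}`. -/
def Efv {A : Type*} (X : Set (ℕ → A)) (F : Finset (List A)) (v : List A) : PB A :=
  idOn (CFv X F v)

/-- The set `E_X = {E(F;v)} ∪ {0}` of idempotents. -/
def EXset {A : Type*} (X : Set (ℕ → A)) : Set (PB A) :=
  {r | r = ∅ ∨ ∃ (F : Finset (List A)) (v : List A), r = Efv X F v}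

/-- The element `s_α E(F;v) s_β^*` of `I(X)`. -/
def elt {A : Type*} (X : Set (ℕ → A)) (α : List A) (F : Finset (List A)) (v β : List A) :
    PB A :=
  rcomp (rcomp (sMap X α) (Efv X F v)) (rinv (sMap X β))

/-- The inverse semigroup `S_X = {s_α E(F;v) s_β^*} ∪ {0}` (closed form). -/
def SXset {A : Type*} (X : Set (ℕ → A)) : Set (PB A) :=
  {r | r = ∅ ∨ ∃ (α β v : List A) (F : Finset (List A)), r = elt X α F v β}

/-- `α` and `β` are in lowest terms: they do not both end with the same letter. -/
def LowTerms {A : Type*} (α β : List A) : Prop :=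
  ∀ a : A, ¬(α.getLast? = some a ∧ β.getLast? = some a)

/-- A word viewed as an element of the free group on `A`. -/
def wgrp {A : Type*} (w : List A) : FreeGroup A := (w.map FreeGroup.of).prod

/-- Natural partial order on partial bijections: `s ≤ t` iff `t s^* s = s`. -/
def rle {A : Type*} (s t : PB A) : Prop := rcomp t (rcomp (rinv s) s) = s

/-- `P_k(x) = {μ ∈ A^k : μx ∈ X}`. -/
def Pk {A : Type*} (X : Set (ℕ → A)) (k : ℕ) (x : ℕ → A) : Set (List A) :=
  {μ | μ.length = k ∧ wcat μ x ∈ X}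

/-- `l`-past equivalence: `P_r(x) = P_r(y)` for all `r ≤ l`. -/
def pastEq {A : Type*} (X : Set (ℕ → A)) (l : ℕ) (x y : ℕ → A) : Prop :=
  ∀ r ≤ l, Pk X r x = Pk X r y

/-- The relation `x ~_{(k,l)} y`. -/
def klEq {A : Type*} (X : Set (ℕ → A)) (k l : ℕ) (x y : ℕ → A) : Prop :=
  (∀ i < k, x i = y i) ∧ pastEq X l (shft^[k] x) (shft^[k] y)

/-- A filter on the idempotent semilattice `E_X`. -/
def IsFilt {A : Type*} (X : Set (ℕ → A)) (ξ : Set (PB A)) : Prop :=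
  ξ.Nonempty ∧ ξ ⊆ EXset X ∧ (∅ : PB A) ∉ ξ ∧
    (∀ e ∈ ξ, ∀ f ∈ ξ, rcomp e f ∈ ξ) ∧
    (∀ e ∈ ξ, ∀ f ∈ EXset X, rcomp e f = e → f ∈ ξ)

/-- An ultrafilter: a filter not properly contained in any other filter. -/
def IsUltra {A : Type*} (X : Set (ℕ → A)) (ξ : Set (PB A)) : Prop :=
  IsFilt X ξ ∧ ∀ ζ, IsFilt X ζ → ξ ⊆ ζ → ζ = ξ

/-- `η_x = {E(F;v) ∈ E_X : x ∈ C(F;v)}`. -/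
def etaF {A : Type*} (X : Set (ℕ → A)) (x : ℕ → A) : Set (PB A) :=
  {e | e ∈ EXset X ∧ (x, x) ∈ e}

section wcatlemmas
variable {A : Type*}

lemma wcat_lt (w : List A) (x : ℕ → A) {n : ℕ} (h : n < w.length) :
    wcat w x n = w.get ⟨n, h⟩ := List.getD_eq_getElem _ _ h

lemma wcat_ge (w : List A) (x : ℕ → A) {n : ℕ} (h : w.length ≤ n) :
    wcat w x n = x (n - w.length) := by
  unfold wcat; rw [List.getD_eq_default _ _ h]

lemma wcat_nil (x : ℕ → A) : wcat [] x = x := by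
  funext n; simp [wcat]

lemma wcat_append (a b : List A) (x : ℕ → A) :
    wcat (a ++ b) x = wcat a (wcat b x) := by
  funext n
  rcases lt_or_ge n a.length with h | h
  · rw [wcat_lt a _ h, wcat_lt (a ++ b) x (by simp; omega)]
    simp [List.getElem_append_left h]
  · rw [wcat_ge a _ h]
    rcases lt_or_ge (n - a.length) b.length with h2 | h2
    · rw [wcat_lt b _ h2, wcat_lt (a ++ b) x (by simp; omega)]
      simp [List.getElem_append_right h]
    · rw [wcat_ge b _ h2, wcat_ge (a++b) x (by simp; omega)]
      congr 1; simp; omega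

lemma wcat_shift (w : List A) (x : ℕ → A) :
    (fun n => wcat w x (n + w.length)) = x := by
  funext n; rw [wcat_ge w x (by omega)]; congr 1; omega

lemma wcat_inj {w : List A} {x y : ℕ → A} (h : wcat w x = wcat w y) : x = y := by
  rw [← wcat_shift w x, ← wcat_shift w y, h]

lemma wcat_recon (x : ℕ → A) (k : ℕ) :
    wcat (List.ofFn (fun i : Fin k => x i)) (fun n => x (n + k)) = x := by
  funext n
  rcases lt_or_ge n k with h | h
  · rw [wcat_lt _ _ (by simpa using h)]; simp
  · rw [wcat_ge _ _ (by simpa using h)]; simp; congr 1; omega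
end wcatlemmas

section lemmas
variable {A : Type*} {X : Set (ℕ → A)}

lemma idOn_empty : idOn (∅ : Set (ℕ → A)) = ∅ := by
  ext p; simp [idOn]

lemma mem_idOn_diag {U : Set (ℕ → A)} {y : ℕ → A} : (y, y) ∈ idOn U ↔ y ∈ U := by
  simp [idOn]

lemma rcomp_idOn (U V : Set (ℕ → A)) :
    rcomp (idOn U) (idOn V) = idOn (U ∩ V) := by
  ext p
  constructor
  · rintro ⟨y, ⟨h1, h1'⟩, h2, h3⟩
    simp only at h1'
    subst h1'
    exact ⟨⟨h2, h1⟩, h3⟩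
  · rintro ⟨⟨h1, h2⟩, h3⟩; exact ⟨p.1, ⟨h2, rfl⟩, h1, h3⟩

lemma rcomp_empty_left (r : PB A) : rcomp (∅ : PB A) r = ∅ := by
  ext p; simp [rcomp]
lemma rcomp_empty_right (r : PB A) : rcomp r (∅ : PB A) = ∅ := by
  ext p; simp [rcomp]

lemma CFv_subset (F : Finset (List A)) (v : List A) : CFv X F v ⊆ X := by
  rintro y ⟨x, rfl, hX, _⟩; exact hX

/-- key intersection lemma, asymmetric version -/
lemma CFv_inter_aux (F G : Finset (List A)) (v w : List A) (hlen : v.length ≤ w.length) :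
    CFv X F v ∩ CFv X G w = ∅ ∨
    ∃ (H : Finset (List A)) (u : List A), CFv X F v ∩ CFv X G w = CFv X H u := by
  classical
  by_cases hpre : ∀ n (h : n < v.length), v.get ⟨n, h⟩ = w.get ⟨n, by omega⟩
  · right
    set u := w.drop v.length with hu
    have hw : w = v ++ u := by
      apply List.ext_getElem (by simp [hu]; omega)
      intro n h1 h2
      rcases lt_or_ge n v.length with h | h
      · rw [List.getElem_append_left h]; exact (hpre n h).symm
      · rw [List.getElem_append_right h]; simp [hu]; congr 1; omega
    refine ⟨G ∪ F.image (· ++ u), w, ?_⟩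
    ext y
    constructor
    · rintro ⟨⟨x₁, hy1, hX, hF⟩, ⟨z, hy2, _, hG⟩⟩
      have hx₁ : x₁ = wcat u z := by
        apply wcat_inj (w := v)
        rw [← hy1, hy2, hw, wcat_append]
      refine ⟨z, hy2, hX, ?_⟩
      intro h hh
      rcases Finset.mem_union.1 hh with h' | h'
      · exact hG h h'
      · rcases Finset.mem_image.1 h' with ⟨f, hf, rfl⟩
        rw [wcat_append]
        rw [← hx₁]
        exact hF f hf
    · rintro ⟨z, rfl, hX, hH⟩
      constructor
      · refine ⟨wcat u z, ?_, hX, ?_⟩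
        · rw [hw, wcat_append]
        · intro f hf
          rw [← wcat_append]
          exact hH _ (Finset.mem_union.2 (Or.inr (Finset.mem_image.2 ⟨f, hf, rfl⟩)))
      · exact ⟨z, rfl, hX, fun g hg => hH g (Finset.mem_union.2 (Or.inl hg))⟩
  · left
    push_neg at hpre
    obtain ⟨n, hn, hne⟩ := hpre
    ext y
    simp only [Set.mem_inter_iff, Set.mem_empty_iff_false, iff_false]
    rintro ⟨⟨x₁, rfl, _⟩, ⟨z, hy2, _⟩⟩
    apply hne
    have e1 : wcat v x₁ n = v.get ⟨n, hn⟩ := wcat_lt v x₁ hn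
    have e2 : wcat v x₁ n = w.get ⟨n, by omega⟩ := by rw [hy2]; exact wcat_lt w z (by omega)
    rw [← e1, e2]

lemma CFv_inter (F G : Finset (List A)) (v w : List A) :
    CFv X F v ∩ CFv X G w = ∅ ∨
    ∃ (H : Finset (List A)) (u : List A), CFv X F v ∩ CFv X G w = CFv X H u := by
  classical
  rcases le_total v.length w.length with h | h
  · exact CFv_inter_aux F G v w h
  · rw [Set.inter_comm]; exact CFv_inter_aux G F w v h

lemma EXset_rcomp {e f : PB A} (he : e ∈ EXset X) (hf : f ∈ EXset X) :
    rcomp e f ∈ EXset X := by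
  rcases he with rfl | ⟨F, v, rfl⟩
  · rw [rcomp_empty_left]; exact Or.inl rfl
  rcases hf with rfl | ⟨G, w, rfl⟩
  · rw [rcomp_empty_right]; exact Or.inl rfl
  rw [Efv, Efv, rcomp_idOn]
  rcases CFv_inter F G v w with h | ⟨H, u, h⟩
  · rw [h, idOn_empty]; exact Or.inl rfl
  · rw [h]; exact Or.inr ⟨H, u, rfl⟩

end lemmas

section topo
variable {A : Type*} [TopologicalSpace A] [DiscreteTopology A] {X : Set (ℕ → A)}

/-- If `X` is closed and `z ∉ X`, some cylinder around `z` misses `X`. -/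
lemma closed_approx (hXcl : IsClosed X) {z : ℕ → A} (hz : z ∉ X) :
    ∃ m, ∀ y : ℕ → A, (∀ i < m, y i = z i) → y ∉ X := by
  have hmem : Xᶜ ∈ nhds z := hXcl.isOpen_compl.mem_nhds hz
  rw [nhds_pi, Filter.mem_pi] at hmem
  obtain ⟨I, hIfin, t, ht, hsub⟩ := hmem
  obtain ⟨m, hm⟩ := hIfin.bddAbove
  refine ⟨m + 1, fun y hy hyX => ?_⟩
  have : y ∈ Set.pi I t := by
    intro i hi
    have : i ≤ m := hm hi
    rw [hy i (by omega)]
    have := ht i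
    rwa [nhds_discrete, Filter.mem_pure] at this
  exact hsub this hyX

lemma isClosed_CFv (hXcl : IsClosed X) (F : Finset (List A)) (v : List A) :
    IsClosed (CFv X F v) := by
  have heq : CFv X F v =
      X ∩ {y | ∀ n (h : n < v.length), y n = v.get ⟨n, h⟩} ∩
        ⋂ f ∈ F, (fun y : ℕ → A => wcat f (fun n => y (n + v.length))) ⁻¹' X := by
    ext y
    constructor
    · rintro ⟨x, rfl, hX, hF⟩
      refine ⟨⟨hX, fun n h => wcat_lt v x h⟩, ?_⟩
      simp only [Set.mem_iInter, Set.mem_preimage]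
      intro f hf
      rw [wcat_shift v x]
      exact hF f hf
    · rintro ⟨⟨hX, hpre⟩, hF⟩
      simp only [Set.mem_iInter, Set.mem_preimage] at hF
      refine ⟨fun n => y (n + v.length), ?_, hX, fun f hf => hF f hf⟩
      funext n
      rcases lt_or_ge n v.length with h | h
      · rw [wcat_lt v _ h]; exact hpre n h
      · rw [wcat_ge v _ h]; congr 1; omega
  rw [heq]
  apply IsClosed.inter
  apply IsClosed.inter hXcl
  · have : {y : ℕ → A | ∀ n (h : n < v.length), y n = v.get ⟨n, h⟩} =
        ⋂ (n : Fin v.length), (fun y : ℕ → A => y n.1) ⁻¹' {v.get n} := by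
      ext y; simp only [Set.mem_iInter, Set.mem_preimage, Set.mem_singleton_iff, Set.mem_setOf_eq]
      exact ⟨fun h n => h n.1 n.2, fun h n hn => h ⟨n, hn⟩⟩
    rw [this]
    exact isClosed_iInter fun n => (isClosed_discrete _).preimage (continuous_apply n.1)
  · apply isClosed_biInter
    intro f hf
    apply hXcl.preimage
    apply continuous_pi
    intro m
    by_cases hm : m < f.length
    · have : (fun y : ℕ → A => wcat f (fun n => y (n + v.length)) m) =
          fun _ => f.get ⟨m, hm⟩ := by
        funext y; exact wcat_lt f _ hm
      rw [this]; exact continuous_const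
    · have : (fun y : ℕ → A => wcat f (fun n => y (n + v.length)) m) =
          fun y => y (m - f.length + v.length) := by
        funext y; exact wcat_ge f _ (by omega)
      rw [this]; exact continuous_apply _

end topo

section main
variable {A : Type*} [TopologicalSpace A] [DiscreteTopology A] {X : Set (ℕ → A)}

lemma mem_CFv_empty_nil {x : ℕ → A} (hx : x ∈ X) : x ∈ CFv X (∅ : Finset (List A)) [] :=
  ⟨x, (wcat_nil x).symm, hx, by simp⟩

lemma etaF_filt {x : ℕ → A} (hx : x ∈ X) : IsFilt X (etaF X x) := by
  refine ⟨⟨Efv X ∅ [], Or.inr ⟨∅, [], rfl⟩, mem_idOn_diag.2 (mem_CFv_empty_nil hx)⟩,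
    fun e he => he.1, fun h => h.2, ?_, ?_⟩
  · rintro e ⟨heE, hex⟩ f ⟨hfE, hfx⟩
    exact ⟨EXset_rcomp heE hfE, ⟨x, hfx, hex⟩⟩
  · rintro e ⟨heE, hex⟩ f hfE hef
    rw [← hef] at hex
    obtain ⟨y, hxy, hyx⟩ := hex
    rcases hfE with rfl | ⟨G, w, rfl⟩
    · exact absurd hxy (Set.notMem_empty _)
    · obtain ⟨h1, h2⟩ := hxy
      simp only at h1 h2
      subst h2
      exact ⟨Or.inr ⟨G, w, rfl⟩, ⟨h1, rfl⟩⟩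

/-- Separation: if `x ∉ C(F;v)` there is a cylinder containing `x` disjoint from `C(F;v)`. -/
lemma etaF_sep (hXcl : IsClosed X) {x : ℕ → A} (hx : x ∈ X) (F : Finset (List A))
    (v : List A) (hnot : x ∉ CFv X F v) :
    ∃ w : List A, x ∈ CFv X (∅ : Finset (List A)) w ∧
      CFv X F v ∩ CFv X (∅ : Finset (List A)) w = ∅ := by
  by_cases hpre : ∀ n (h : n < v.length), x n = v.get ⟨n, h⟩
  · -- x starts with v
    set x' : ℕ → A := fun n => x (n + v.length) with hx'
    have hxv : x = wcat v x' := by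
      funext n
      rcases lt_or_ge n v.length with h | h
      · rw [wcat_lt v _ h]; exact hpre n h
      · rw [wcat_ge v _ h, hx']; simp only; congr 1; omega
    have : ∃ f ∈ F, wcat f x' ∉ X := by
      by_contra hc
      push_neg at hc
      exact hnot ⟨x', hxv, hx, hc⟩
    obtain ⟨f, hf, hfX⟩ := this
    obtain ⟨m₀, hm₀⟩ := closed_approx hXcl hfX
    set m := max m₀ f.length with hm
    have hmP : ∀ y : ℕ → A, (∀ i < m, y i = wcat f x' i) → y ∉ X :=
      fun y hy => hm₀ y fun i hi => hy i (lt_of_lt_of_le hi (le_max_left _ _))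
    set t := m - f.length with ht
    set u := List.ofFn (fun i : Fin t => x' i) with hu
    refine ⟨v ++ u, ?_, ?_⟩
    · refine ⟨fun n => x' (n + t), ?_, hx, by simp⟩
      rw [wcat_append, wcat_recon x' t, ← hxv]
    · ext y
      simp only [Set.mem_inter_iff, Set.mem_empty_iff_false, iff_false]
      rintro ⟨⟨x₁, hy1, _, hF1⟩, ⟨z, hy2, _, _⟩⟩
      have hx₁ : x₁ = wcat u z := by
        apply wcat_inj (w := v)
        rw [← hy1, hy2, wcat_append]
      have hXf : wcat f (wcat u z) ∈ X := hx₁ ▸ hF1 f hf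
      apply hmP (wcat f (wcat u z)) _ hXf
      intro i hi
      rcases lt_or_ge i f.length with h | h
      · rw [wcat_lt f _ h, wcat_lt f _ h]
      · rw [wcat_ge f _ h, wcat_ge f _ h]
        have hit : i - f.length < t := by omega
        rw [wcat_lt u _ (by simpa [hu] using hit)]
        simp [hu]
  · -- x does not start with v
    push_neg at hpre
    obtain ⟨n, hn, hne⟩ := hpre
    set w := List.ofFn (fun i : Fin v.length => x i) with hw
    have hwl : w.length = v.length := by simp [hw]
    refine ⟨w, ⟨fun n => x (n + v.length), (wcat_recon x v.length).symm, hx, by simp⟩, ?_⟩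
    ext y
    simp only [Set.mem_inter_iff, Set.mem_empty_iff_false, iff_false]
    rintro ⟨⟨x₁, hy1, _, _⟩, ⟨z, hy2, _, _⟩⟩
    apply hne
    have e1 : y n = v.get ⟨n, hn⟩ := by rw [hy1]; exact wcat_lt v x₁ hn
    have e2 : y n = x n := by
      rw [hy2, wcat_lt w z (by omega)]
      simp [hw]
    rw [← e2, e1]

lemma etaF_ultra (hXcl : IsClosed X) {x : ℕ → A} (hx : x ∈ X) : IsUltra X (etaF X x) := by
  refine ⟨etaF_filt hx, fun ζ hζ hsub => ?_⟩
  obtain ⟨hne, hEX, hz, hprod, hup⟩ := hζ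
  apply Set.Subset.antisymm _ hsub
  intro e he
  have heE : e ∈ EXset X := hEX he
  rcases heE with rfl | ⟨F, v, rfl⟩
  · exact absurd he hz
  refine ⟨Or.inr ⟨F, v, rfl⟩, mem_idOn_diag.2 ?_⟩
  by_contra hnot
  obtain ⟨w, hxw, hdisj⟩ := etaF_sep hXcl hx F v hnot
  have he' : Efv X (∅ : Finset (List A)) w ∈ ζ :=
    hsub ⟨Or.inr ⟨∅, w, rfl⟩, mem_idOn_diag.2 hxw⟩
  have : rcomp (Efv X F v) (Efv X (∅ : Finset (List A)) w) ∈ ζ := hprod _ he _ he'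
  rw [Efv, Efv, rcomp_idOn, hdisj, idOn_empty] at this
  exact hz this

end main

section part2
variable {A : Type*} [Fintype A] [TopologicalSpace A] [DiscreteTopology A] {X : Set (ℕ → A)}

lemma ultra_form (hXcl : IsClosed X) {ξ : Set (PB A)} (hξ : IsUltra X ξ) :
    ∃ x ∈ X, ξ = etaF X x := by
  obtain ⟨⟨hne, hEX, hz, hprod, hup⟩, hmax⟩ := hξ
  obtain ⟨e₀, he₀⟩ := hne
  have hform : ∀ e ∈ ξ, ∃ F v, e = Efv X F v := by
    intro e he
    rcases hEX he with rfl | h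
    · exact absurd he hz
    · exact h
  set Z : {e : PB A // e ∈ ξ} → Set (ℕ → A) := fun i => {y | (y, y) ∈ i.1} with hZ
  have hZC : ∀ i : {e : PB A // e ∈ ξ}, ∃ F v, i.1 = Efv X F v ∧ Z i = CFv X F v := by
    intro i
    obtain ⟨F, v, hFv⟩ := hform i.1 i.2
    refine ⟨F, v, hFv, ?_⟩
    ext y; rw [hZ]; simp only [Set.mem_setOf_eq, hFv]; exact mem_idOn_diag
  have hZcl : ∀ i, IsClosed (Z i) := by
    intro i
    obtain ⟨F, v, _, hC⟩ := hZC i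
    rw [hC]; exact isClosed_CFv hXcl F v
  have hdiag : ∀ e ∈ ξ, {y | (y, y) ∈ e}.Nonempty ∧ {y | (y, y) ∈ e} ⊆ X := by
    intro e he
    obtain ⟨F, v, rfl⟩ := hform e he
    have hCd : {y | (y, y) ∈ Efv X F v} = CFv X F v := by
      ext y; exact mem_idOn_diag
    rw [hCd]
    refine ⟨?_, CFv_subset F v⟩
    rcases Set.eq_empty_or_nonempty (CFv X F v) with h | h
    · rw [Efv, h, idOn_empty] at he; exact absurd he hz
    · exact h
  have hfin : ∀ t : Finset {e : PB A // e ∈ ξ}, (X ∩ ⋂ i ∈ t, Z i).Nonempty := by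
    intro t
    have hclaim : ∃ e ∈ ξ, {y | (y, y) ∈ e} ⊆ ⋂ i ∈ t, Z i := by
      classical
      induction t using Finset.induction_on with
      | empty => exact ⟨e₀, he₀, by simp⟩
      | insert _ _ ha ih =>
        rename_i a s
        obtain ⟨e, he, hsub⟩ := ih
        refine ⟨rcomp a.1 e, hprod _ a.2 _ he, ?_⟩
        obtain ⟨F, v, hFv, hCa⟩ := hZC a
        obtain ⟨G, w, rfl⟩ := hform e he
        rw [hFv, Efv, Efv, rcomp_idOn]
        rw [Finset.set_biInter_insert]
        intro y hy
        have hy' : y ∈ CFv X F v ∩ CFv X G w := mem_idOn_diag.1 hy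
        refine ⟨by rw [hCa]; exact hy'.1, hsub ?_⟩
        simp only [Set.mem_setOf_eq]
        exact mem_idOn_diag.2 hy'.2
    obtain ⟨e, he, hsub⟩ := hclaim
    obtain ⟨⟨y, hy⟩, hX⟩ := hdiag e he
    exact ⟨y, hX hy, hsub hy⟩
  have hcomp : IsCompact X := hXcl.isCompact
  obtain ⟨x, hxX, hxI⟩ := hcomp.inter_iInter_nonempty Z hZcl hfin
  refine ⟨x, hxX, ?_⟩
  have hsub : ξ ⊆ etaF X x := by
    intro e he
    exact ⟨hEX he, Set.mem_iInter.1 hxI ⟨e, he⟩⟩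
  exact (hmax (etaF X x) (etaF_filt hxX) hsub).symm

end part2

theorem stmt12 {A : Type*} [Fintype A] [TopologicalSpace A] [DiscreteTopology A]
    (X : Set (ℕ → A)) (hXcl : IsClosed X) (hXsh : ∀ x ∈ X, shft x ∈ X) :
    (∀ x ∈ X, IsUltra X (etaF X x)) ∧
    (∀ ξ, IsUltra X ξ → ∃ x ∈ X, ξ = etaF X x) :=
  ⟨fun _ hx => etaF_ultra hXcl hx, fun _ hξ => ultra_form hXcl hξ⟩
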